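/- (One-step consensus change.) Let each f_i : ℝ^d → ℝ be L-smooth, f := (1/n)∑_i f_i, and assume (1/n)∑_{i=1}^n ‖∇f_i(y) − ∇f(y)‖² ≤ ζ² for all y ∈ ℝ^d. Let W ∈ ℝ^{n×n} be doubly stochastic and satisfy ‖ZW − Z̄‖_F² ≤ (1−ρ)‖Z − Z̄‖_F² for all Z ∈ ℝ^{d×n}. Let X, M ∈ ℝ^{d×n} be deterministic with column averages x̄ of X, and let G be a random matrix whose columns g_1,…,g_n are independent with E[g_i] = ∇f_i(x_i) and E‖g_i − ∇f_i(x_i)‖² ≤ σ², where x_i is the i-th column of X. Define X⁺ := (X − η(βM + G))W. If η ≤ ρ/(7L), then (1/n)E‖X⁺ − X̄⁺‖_F² ≤ ((1 − ρ/4)/n)‖X − X̄‖_F² + 12η²ζ²/ρ + 4(1−ρ)η²σ² + (6η²β²/(ρn))‖M − M̄‖_F². -/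

import Mathlib

open MeasureTheory ProbabilityTheory Finset

noncomputable section

open RealInnerProductSpace in
private lemma osc_le' {E : Type*} [NormedAddCommGroup E] [InnerProductSpace ℝ E] {n : ℕ}
    (hn : 0 < n) (v : Fin n → E) :
    ∑ j, ‖v j - (n:ℝ)⁻¹ • ∑ i, v i‖^2 ≤ ∑ j, ‖v j‖^2 := by
  set m : E := (n:ℝ)⁻¹ • ∑ i, v i with hm
  have hn' : (n:ℝ) ≠ 0 := by positivity
  have hsum : ∑ i, v i = (n:ℝ) • m := by
    rw [hm, smul_smul, mul_inv_cancel₀ hn', one_smul]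
  have key : ∑ j, ‖v j - m‖^2 = (∑ j, ‖v j‖^2) - (n:ℝ)*‖m‖^2 := by
    have h1 : ∑ j, ⟪v j, m⟫ = (n:ℝ) * ‖m‖^2 := by
      rw [← sum_inner, hsum, real_inner_smul_left, real_inner_self_eq_norm_sq]
    simp_rw [norm_sub_sq_real]
    rw [Finset.sum_add_distrib, Finset.sum_sub_distrib, ← Finset.mul_sum, h1,
      Finset.sum_const, card_univ, Fintype.card_fin, nsmul_eq_mul]
    ring
  rw [key]
  have : (0:ℝ) ≤ (n:ℝ)*‖m‖^2 := by positivity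
  linarith

private lemma osc_le_center' {E : Type*} [NormedAddCommGroup E] [InnerProductSpace ℝ E] {n : ℕ}
    (hn : 0 < n) (v : Fin n → E) (c : E) :
    ∑ j, ‖v j - (n:ℝ)⁻¹ • ∑ i, v i‖^2 ≤ ∑ j, ‖v j - c‖^2 := by
  have h := osc_le' hn (fun j => v j - c)
  have hn' : (n:ℝ) ≠ 0 := by positivity
  have hmean : (n:ℝ)⁻¹ • ∑ i, (v i - c) = (n:ℝ)⁻¹ • (∑ i, v i) - c := by
    rw [Finset.sum_sub_distrib, smul_sub, Finset.sum_const, card_univ, Fintype.card_fin,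
      ← Nat.cast_smul_eq_nsmul ℝ, smul_smul, inv_mul_cancel₀ hn', one_smul]
  simp only [hmean, sub_sub_sub_cancel_right] at h
  exact h

open RealInnerProductSpace in
private lemma young3' {E : Type*} [NormedAddCommGroup E] [InnerProductSpace ℝ E]
    (t : ℝ) (ht : 0 < t) (a b c : E) :
    ‖a + b + c‖^2 ≤ (1+t)*‖a‖^2 + (2*(1+1/t))*‖b‖^2 + (2*(1+1/t))*‖c‖^2 := by
  have h1 : ‖a + (b+c)‖^2 = ‖a‖^2 + 2*⟪a,b+c⟫ + ‖b+c‖^2 := norm_add_sq_real _ _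
  have h2 : ‖b + c‖^2 = ‖b‖^2 + 2*⟪b,c⟫ + ‖c‖^2 := norm_add_sq_real _ _
  have i1 : ⟪a,b+c⟫ ≤ ‖a‖*‖b+c‖ := real_inner_le_norm _ _
  have i2 : ⟪b,c⟫ ≤ ‖b‖*‖c‖ := real_inner_le_norm _ _
  have hbc : ‖b+c‖^2 ≤ 2*‖b‖^2 + 2*‖c‖^2 := by nlinarith [sq_nonneg (‖b‖-‖c‖)]
  have hts : t*(1/t) = 1 := mul_one_div_cancel ht.ne'
  have key : 2*t*⟪a,b+c⟫ ≤ t*(t*‖a‖^2) + ‖b+c‖^2 := by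
    nlinarith [sq_nonneg (t*‖a‖-‖b+c‖), mul_le_mul_of_nonneg_left i1 ht.le]
  have hy : 2*⟪a,b+c⟫ ≤ t*‖a‖^2 + (1/t)*‖b+c‖^2 := by
    have h1t : 0 < 1/t := by positivity
    nlinarith [mul_le_mul_of_nonneg_left key h1t.le, hts]
  have habc : a + b + c = a + (b+c) := by abel
  rw [habc, h1]
  have ht' : 0 < 1/t := by positivity
  nlinarith [hbc, hy, norm_nonneg (b+c), sq_nonneg ‖b+c‖]

private lemma sq_le_two_sq_add_two_sq {x a b : ℝ} (hx : 0 ≤ x) (h : x ≤ a + b) :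
    x^2 ≤ 2*a^2 + 2*b^2 := by nlinarith [sq_nonneg (a-b), sq_nonneg (a+b), sq_nonneg x]

private lemma scalar_combine {ρ η β L σ ζ A Mm Cc SD nn : ℝ}
    (hρ : 0 < ρ) (hρ1 : ρ ≤ 1) (hA0 : 0 ≤ A) (hMm0 : 0 ≤ Mm) (hCc0 : 0 ≤ Cc)
    (hnn : 0 < nn) (hη : 0 < η) (hL : 0 < L) (hstep : η ≤ ρ/(7*L))
    (hDsum : SD ≤ (1+ρ/2)*A + (2*(1+2/ρ))*((η*β)^2*Mm) + (2*(1+2/ρ))*(η^2*Cc))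
    (hCb : Cc ≤ 2*L^2*A + 2*nn*ζ^2) :
    (1-ρ)*(SD + η^2*(nn*σ^2))
      ≤ (1-ρ/4)*A + (12*η^2*ζ^2/ρ)*nn + 4*(1-ρ)*η^2*σ^2*nn + (6*η^2*β^2/ρ)*Mm := by
  have h1ρ : (0:ℝ) ≤ 1-ρ := by linarith
  have hη2 : η^2*(49*L^2) ≤ ρ^2 := by
    have h7 : η * (7*L) ≤ ρ := (le_div_iff₀ (by positivity)).1 hstep
    have := pow_le_pow_left₀ (by positivity : (0:ℝ) ≤ η*(7*L)) h7 2
    nlinarith [this]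
  have hL2 : 12*η^2*L^2/ρ ≤ ρ/4 := by
    rw [div_le_div_iff₀ hρ (by norm_num : (0:ℝ) < 4)]
    nlinarith [hη2, mul_nonneg (sq_nonneg η) (sq_nonneg L)]
  have h2ρ : (2:ℝ) ≤ 2/ρ := by
    rw [le_div_iff₀ hρ]; nlinarith
  have hc2 : (2*(1+2/ρ)) ≤ 6/ρ := by
    have e : (2:ℝ)*(1+2/ρ) = 2 + 2*(2/ρ) := by ring
    have e2 : (2:ℝ)/ρ + 2*(2/ρ) = 6/ρ := by ring
    linarith
  have hc2pos : (0:ℝ) ≤ 2*(1+2/ρ) := by positivity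
  have h6ρ : (0:ℝ) ≤ 6/ρ := by positivity
  have hcoef : (1-ρ)*(2*(1+2/ρ)) ≤ 6/ρ := by
    have : (1-ρ)*(2*(1+2/ρ)) ≤ 1*(2*(1+2/ρ)) :=
      mul_le_mul_of_nonneg_right (by linarith) hc2pos
    linarith
  have h1half : (1-ρ)*(1+ρ/2) ≤ 1-ρ/2 := by nlinarith
  have hs1 : (1-ρ)*SD ≤ ((1-ρ)*(1+ρ/2))*A + ((1-ρ)*(2*(1+2/ρ)))*((η*β)^2*Mm)
      + ((1-ρ)*(2*(1+2/ρ)))*(η^2*Cc) := by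
    calc (1-ρ)*SD ≤ (1-ρ)*((1+ρ/2)*A + (2*(1+2/ρ))*((η*β)^2*Mm) + (2*(1+2/ρ))*(η^2*Cc)) :=
          mul_le_mul_of_nonneg_left hDsum h1ρ
      _ = _ := by ring
  have hs2 : ((1-ρ)*(1+ρ/2))*A ≤ (1-ρ/2)*A := mul_le_mul_of_nonneg_right h1half hA0
  have hs3 : ((1-ρ)*(2*(1+2/ρ)))*((η*β)^2*Mm) ≤ (6/ρ)*((η*β)^2*Mm) :=
    mul_le_mul_of_nonneg_right hcoef (mul_nonneg (sq_nonneg (η*β)) hMm0)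
  have hs4 : ((1-ρ)*(2*(1+2/ρ)))*(η^2*Cc) ≤ (6/ρ)*(η^2*Cc) :=
    mul_le_mul_of_nonneg_right hcoef (mul_nonneg (sq_nonneg η) hCc0)
  have hs5 : (6/ρ)*(η^2*Cc) ≤ (6/ρ)*(η^2*(2*L^2*A + 2*nn*ζ^2)) :=
    mul_le_mul_of_nonneg_left (mul_le_mul_of_nonneg_left hCb (sq_nonneg η)) h6ρ
  have hs6 : (6/ρ)*(η^2*(2*L^2*A + 2*nn*ζ^2))
      = (12*η^2*L^2/ρ)*A + (12*η^2*ζ^2/ρ)*nn := by ring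
  have hs7 : (12*η^2*L^2/ρ)*A ≤ (ρ/4)*A := mul_le_mul_of_nonneg_right hL2 hA0
  have hσs : (1-ρ)*(η^2*(nn*σ^2)) ≤ 4*(1-ρ)*η^2*σ^2*nn := by
    have hx : (0:ℝ) ≤ (1-ρ)*(η^2*(nn*σ^2)) :=
      mul_nonneg h1ρ (mul_nonneg (sq_nonneg η) (mul_nonneg hnn.le (sq_nonneg σ)))
    calc (1-ρ)*(η^2*(nn*σ^2)) ≤ 4*((1-ρ)*(η^2*(nn*σ^2))) := by linarith
      _ = 4*(1-ρ)*η^2*σ^2*nn := by ring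
  have hTR : (1-ρ)*(SD + η^2*(nn*σ^2))
      ≤ (1-ρ/4)*A + (12*η^2*ζ^2/ρ)*nn + 4*(1-ρ)*η^2*σ^2*nn + (6*η^2*β^2/ρ)*Mm := by
    have e : (1-ρ)*(SD + η^2*(nn*σ^2)) = (1-ρ)*SD + (1-ρ)*(η^2*(nn*σ^2)) := by ring
    have e2 : (6/ρ)*((η*β)^2*Mm) = (6*η^2*β^2/ρ)*Mm := by ring
    linarith [hs1, hs2, hs3, hs4, hs5, hs6, hs7, hσs, e, e2, mul_nonneg hρ.le hA0]
  exact hTR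

set_option maxHeartbeats 1000000 in
open RealInnerProductSpace in
theorem one_step_consensus_change
    {Ω : Type*} [MeasurableSpace Ω] (P : Measure Ω) [IsProbabilityMeasure P]
    (d n : ℕ) (hn : 0 < n) (L σ ζ ρ η β : ℝ) (hL : 0 < L)
    (hρ : 0 < ρ) (hρ1 : ρ ≤ 1) (hη : 0 < η) (hβ0 : 0 ≤ β) (hβ1 : β < 1)
    (f : Fin n → EuclideanSpace ℝ (Fin d) → ℝ)
    (hdiff : ∀ i, Differentiable ℝ (f i))
    (hsmooth : ∀ i u v, ‖gradient (f i) u - gradient (f i) v‖ ≤ L * ‖u - v‖)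
    (hhet : ∀ y : EuclideanSpace ℝ (Fin d),
      (n : ℝ)⁻¹ * ∑ i, ‖gradient (f i) y
          - gradient (fun z => (n : ℝ)⁻¹ * ∑ j, f j z) y‖ ^ 2 ≤ ζ ^ 2)
    (W : Matrix (Fin n) (Fin n) ℝ)
    (hWrow : ∀ i, ∑ j, W i j = 1) (hWcol : ∀ j, ∑ i, W i j = 1)
    (hWcontr : ∀ Z : Fin n → EuclideanSpace ℝ (Fin d),
      ∑ j, ‖(∑ i, W i j • Z i) - (n : ℝ)⁻¹ • ∑ i, Z i‖ ^ 2
        ≤ (1 - ρ) * ∑ j, ‖Z j - (n : ℝ)⁻¹ • ∑ i, Z i‖ ^ 2)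
    (X M : Fin n → EuclideanSpace ℝ (Fin d))
    (g : Fin n → Ω → EuclideanSpace ℝ (Fin d))
    (hindep : iIndepFun g P)
    (hint : ∀ i, Integrable (g i) P)
    (hmean : ∀ i, ∫ ω, g i ω ∂P = gradient (f i) (X i))
    (hvarint : ∀ i, Integrable (fun ω => ‖g i ω - gradient (f i) (X i)‖ ^ 2) P)
    (hvar : ∀ i, ∫ ω, ‖g i ω - gradient (f i) (X i)‖ ^ 2 ∂P ≤ σ ^ 2)
    (hstep : η ≤ ρ / (7 * L))
    (Xp : Ω → Fin n → EuclideanSpace ℝ (Fin d))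
    (hXp : ∀ ω j, Xp ω j = ∑ i, W i j • (X i - η • (β • M i + g i ω))) :
    (n : ℝ)⁻¹ *
        ∫ ω, ∑ j, ‖Xp ω j - (n : ℝ)⁻¹ • ∑ i, Xp ω i‖ ^ 2 ∂P
      ≤ ((1 - ρ / 4) / n) * ∑ j, ‖X j - (n : ℝ)⁻¹ • ∑ i, X i‖ ^ 2
        + 12 * η ^ 2 * ζ ^ 2 / ρ
        + 4 * (1 - ρ) * η ^ 2 * σ ^ 2
        + (6 * η ^ 2 * β ^ 2 / (ρ * n)) * ∑ j, ‖M j - (n : ℝ)⁻¹ • ∑ i, M i‖ ^ 2 := by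
  have hn' : (n:ℝ) ≠ 0 := by positivity
  have hnpos : (0:ℝ) < n := by positivity
  -- abbreviations
  set xb : EuclideanSpace ℝ (Fin d) := (n:ℝ)⁻¹ • ∑ i, X i with hxb
  set mb : EuclideanSpace ℝ (Fin d) := (n:ℝ)⁻¹ • ∑ i, M i with hmb
  set gr : Fin n → EuclideanSpace ℝ (Fin d) := fun i => gradient (f i) (X i) with hgr
  set gb : EuclideanSpace ℝ (Fin d) := (n:ℝ)⁻¹ • ∑ i, gr i with hgb
  set noise : Fin n → Ω → EuclideanSpace ℝ (Fin d) := fun i ω => g i ω - gr i with hnoise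
  set Nn : Fin n → Ω → EuclideanSpace ℝ (Fin d) :=
    fun j ω => noise j ω - (n:ℝ)⁻¹ • ∑ i, noise i ω with hNn
  set D : Fin n → EuclideanSpace ℝ (Fin d) :=
    fun j => (X j - xb) + (-(η*β)) • (M j - mb) + (-η) • (gr j - gb) with hD
  -- basic integrability of noise
  have hnoiseint : ∀ i, Integrable (noise i) P := fun i => by
    exact (hint i).sub (integrable_const (gradient (f i) (X i)))
  have hnoisemean : ∀ i, ∫ ω, noise i ω ∂P = 0 := by
    intro i
    simp only [hnoise, hgr]
    rw [integral_sub (hint i) (integrable_const _), hmean i, integral_const]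
    simp
  have hvarint' : ∀ i, Integrable (fun ω => ‖noise i ω‖^2) P := fun i => by
    simpa [hnoise, hgr] using hvarint i
  have hvar' : ∀ i, ∫ ω, ‖noise i ω‖^2 ∂P ≤ σ^2 := fun i => by
    simpa [hnoise, hgr] using hvar i
  have hsmulint : Integrable (fun ω => (n:ℝ)⁻¹ • ∑ i, noise i ω) P :=
    (integrable_finset_sum univ (fun i _ => hnoiseint i)).smul ((n:ℝ)⁻¹)
  have hNint : ∀ j, Integrable (Nn j) P := fun j => by
    exact (hnoiseint j).sub hsmulint
  have hNmean : ∀ j, ∫ ω, Nn j ω ∂P = 0 := by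
    intro j
    simp only [hNn]
    rw [integral_sub (hnoiseint j) hsmulint, hnoisemean j, integral_smul,
      integral_finset_sum univ (fun i _ => hnoiseint i)]
    simp [hnoisemean]
  -- integrability of ‖Nn j‖²
  have hNsq_int : ∀ j, Integrable (fun ω => ‖Nn j ω‖^2) P := by
    intro j
    have hmeas : AEStronglyMeasurable (fun ω => ‖Nn j ω‖^2) P := by
      have h1 := (hNint j).aestronglyMeasurable.norm
      have : (fun ω => ‖Nn j ω‖^2) = fun ω => ‖Nn j ω‖ * ‖Nn j ω‖ := by
        funext ω; rw [sq]
      rw [this]; exact h1.mul h1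
    refine Integrable.mono' (g := fun ω => 2*‖noise j ω‖^2 + 2*∑ i, ‖noise i ω‖^2)
      (((hvarint' j).const_mul 2).add
        ((integrable_finset_sum univ (fun i _ => hvarint' i)).const_mul 2)) hmeas
      (ae_of_all _ fun ω => ?_)
    have hb : ‖(n:ℝ)⁻¹ • ∑ i, noise i ω‖^2 ≤ ∑ i, ‖noise i ω‖^2 := by
      have h1 : ‖(n:ℝ)⁻¹ • ∑ i, noise i ω‖ ≤ (n:ℝ)⁻¹ * ∑ i, ‖noise i ω‖ := by
        rw [norm_smul, Real.norm_eq_abs, abs_of_nonneg (by positivity)]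
        exact mul_le_mul_of_nonneg_left (norm_sum_le _ _) (by positivity)
      have h2 : (∑ i, ‖noise i ω‖)^2 ≤ (n:ℝ) * ∑ i, ‖noise i ω‖^2 := by
        have := sq_sum_le_card_mul_sum_sq (s := (univ : Finset (Fin n)))
          (f := fun i => ‖noise i ω‖)
        simpa using this
      have h3 : ‖(n:ℝ)⁻¹ • ∑ i, noise i ω‖^2 ≤ ((n:ℝ)⁻¹ * ∑ i, ‖noise i ω‖)^2 :=
        pow_le_pow_left₀ (norm_nonneg _) h1 2
      have h4 : ((n:ℝ)⁻¹ * ∑ i, ‖noise i ω‖)^2 = ((n:ℝ)⁻¹)^2 * (∑ i, ‖noise i ω‖)^2 := by ring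
      have h5 : ((n:ℝ)⁻¹)^2 * ((n:ℝ) * ∑ i, ‖noise i ω‖^2) = (n:ℝ)⁻¹ * ∑ i, ‖noise i ω‖^2 := by
        field_simp
      have h6 : (n:ℝ)⁻¹ * ∑ i, ‖noise i ω‖^2 ≤ ∑ i, ‖noise i ω‖^2 := by
        have hsum0 : (0:ℝ) ≤ ∑ i, ‖noise i ω‖^2 := Finset.sum_nonneg fun i _ => sq_nonneg _
        have hinv1 : (n:ℝ)⁻¹ ≤ 1 := by
          rw [inv_le_one_iff₀]; right; exact_mod_cast hn
        nlinarith
      calc ‖(n:ℝ)⁻¹ • ∑ i, noise i ω‖^2 ≤ ((n:ℝ)⁻¹ * ∑ i, ‖noise i ω‖)^2 := h3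
        _ = ((n:ℝ)⁻¹)^2 * (∑ i, ‖noise i ω‖)^2 := h4
        _ ≤ ((n:ℝ)⁻¹)^2 * ((n:ℝ) * ∑ i, ‖noise i ω‖^2) :=
            mul_le_mul_of_nonneg_left h2 (sq_nonneg _)
        _ = (n:ℝ)⁻¹ * ∑ i, ‖noise i ω‖^2 := h5
        _ ≤ ∑ i, ‖noise i ω‖^2 := h6
    have hsplit : ‖Nn j ω‖^2 ≤ 2*‖noise j ω‖^2 + 2*‖(n:ℝ)⁻¹ • ∑ i, noise i ω‖^2 := by
      simp only [hNn]
      exact sq_le_two_sq_add_two_sq (norm_nonneg _) (norm_sub_le _ _)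
    rw [Real.norm_eq_abs, abs_of_nonneg (sq_nonneg _)]
    show ‖Nn j ω‖^2 ≤ 2*‖noise j ω‖^2 + 2*∑ i, ‖noise i ω‖^2
    linarith [hsplit, hb]
  -- pointwise projection bound for the noise oscillation
  have hNsum_le : ∀ ω, ∑ j, ‖Nn j ω‖^2 ≤ ∑ j, ‖noise j ω‖^2 := by
    intro ω
    simpa only [hNn] using osc_le' hn (fun j => noise j ω)
  -- pointwise contraction + decomposition
  have hpoint : ∀ ω, ∑ j, ‖Xp ω j - (n:ℝ)⁻¹ • ∑ i, Xp ω i‖^2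
      ≤ (1-ρ) * ∑ j, ‖D j + (-η) • Nn j ω‖^2 := by
    intro ω
    set Y : Fin n → EuclideanSpace ℝ (Fin d) := fun j => X j - η • (β • M j + g j ω) with hY
    have hXpY : ∀ j, Xp ω j = ∑ i, W i j • Y i := fun j => by rw [hXp ω j]
    have hsum : ∑ i, Xp ω i = ∑ i, Y i := by
      calc ∑ i, Xp ω i = ∑ j, ∑ i, W i j • Y i := Finset.sum_congr rfl fun j _ => hXpY j
        _ = ∑ i, ∑ j, W i j • Y i := Finset.sum_comm
        _ = ∑ i, Y i := Finset.sum_congr rfl fun i _ => by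
            rw [← Finset.sum_smul, hWrow i, one_smul]
    have e1 : ∑ i, Y i = (∑ i, X i) - η • (β • ∑ i, M i + ∑ i, g i ω) := by
      simp only [hY, smul_add, Finset.sum_sub_distrib, Finset.sum_add_distrib,
        Finset.smul_sum]
    have e2 : ∑ i, noise i ω = (∑ i, g i ω) - ∑ i, gr i := by
      simp only [hnoise]
      rw [Finset.sum_sub_distrib]
    have hYD : ∀ j, Y j - (n:ℝ)⁻¹ • ∑ i, Y i = D j + (-η) • Nn j ω := by
      intro j
      simp only [hNn, hD]
      rw [e1, e2]
      simp only [hY, hnoise, hxb, hmb, hgb]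
      module
    calc ∑ j, ‖Xp ω j - (n:ℝ)⁻¹ • ∑ i, Xp ω i‖^2
        = ∑ j, ‖(∑ i, W i j • Y i) - (n:ℝ)⁻¹ • ∑ i, Y i‖^2 := by
          rw [hsum]
          exact Finset.sum_congr rfl fun j _ => by rw [hXpY j]
      _ ≤ (1-ρ) * ∑ j, ‖Y j - (n:ℝ)⁻¹ • ∑ i, Y i‖^2 := hWcontr Y
      _ = (1-ρ) * ∑ j, ‖D j + (-η) • Nn j ω‖^2 := by
          congr 1
          exact Finset.sum_congr rfl fun j _ => by rw [hYD j]
  -- expansion of the squared norm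
  have hexpand : ∀ (ω : Ω) (j : Fin n), ‖D j + (-η) • Nn j ω‖^2
      = ‖D j‖^2 + (-(2*η))*⟪D j, Nn j ω⟫ + η^2*‖Nn j ω‖^2 := by
    intro ω j
    rw [norm_add_sq_real, real_inner_smul_right, norm_smul, Real.norm_eq_abs, mul_pow, sq_abs]
    ring
  have hjint : ∀ j, Integrable (fun ω => ‖D j + (-η) • Nn j ω‖^2) P := by
    intro j
    have e : (fun ω => ‖D j + (-η) • Nn j ω‖^2)
        = fun ω => ‖D j‖^2 + ((-(2*η))*⟪D j, Nn j ω⟫ + η^2*‖Nn j ω‖^2) := by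
      funext ω; rw [hexpand ω j]; ring
    rw [e]
    exact (integrable_const _).add
      ((((hNint j).const_inner _).const_mul _).add ((hNsq_int j).const_mul _))
  have hintS : ∫ ω, ∑ j, ‖D j + (-η) • Nn j ω‖^2 ∂P
      = (∑ j, ‖D j‖^2) + η^2 * ∑ j, ∫ ω, ‖Nn j ω‖^2 ∂P := by
    rw [integral_finset_sum univ (fun j _ => hjint j)]
    have hper : ∀ j, ∫ ω, ‖D j + (-η) • Nn j ω‖^2 ∂P
        = ‖D j‖^2 + η^2 * ∫ ω, ‖Nn j ω‖^2 ∂P := by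
      intro j
      have hI1 : Integrable (fun ω => (-(2*η))*⟪D j, Nn j ω⟫) P :=
        ((hNint j).const_inner _).const_mul _
      have hI2 : Integrable (fun ω => η^2*‖Nn j ω‖^2) P := (hNsq_int j).const_mul _
      have h0 : ∫ ω, (‖D j‖^2 + ((-(2*η))*⟪D j, Nn j ω⟫ + η^2*‖Nn j ω‖^2)) ∂P
          = (∫ _ω : Ω, ‖D j‖^2 ∂P)
            + ∫ ω, ((-(2*η))*⟪D j, Nn j ω⟫ + η^2*‖Nn j ω‖^2) ∂P :=
        integral_add (integrable_const _) (hI1.add hI2)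
      have h1 : ∫ ω, ((-(2*η))*⟪D j, Nn j ω⟫ + η^2*‖Nn j ω‖^2) ∂P
          = (∫ ω, (-(2*η))*⟪D j, Nn j ω⟫ ∂P) + ∫ ω, η^2*‖Nn j ω‖^2 ∂P :=
        integral_add hI1 hI2
      have h2 : ∫ ω, (-(2*η))*⟪D j, Nn j ω⟫ ∂P = (-(2*η)) * ∫ ω, ⟪D j, Nn j ω⟫ ∂P :=
        integral_const_mul _ _
      have h3 : ∫ ω, ⟪D j, Nn j ω⟫ ∂P = 0 := by
        rw [integral_inner (hNint j), hNmean j, inner_zero_right]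
      have h4 : ∫ ω, η^2*‖Nn j ω‖^2 ∂P = η^2 * ∫ ω, ‖Nn j ω‖^2 ∂P := integral_const_mul _ _
      have h5 : ∫ _ω : Ω, ‖D j‖^2 ∂P = ‖D j‖^2 := by rw [integral_const]; simp
      calc ∫ ω, ‖D j + (-η) • Nn j ω‖^2 ∂P
          = ∫ ω, (‖D j‖^2 + ((-(2*η))*⟪D j, Nn j ω⟫ + η^2*‖Nn j ω‖^2)) ∂P := by
            refine integral_congr_ae (Filter.EventuallyEq.of_eq (funext fun ω => ?_))
            rw [hexpand ω j]; ring
        _ = ‖D j‖^2 + η^2 * ∫ ω, ‖Nn j ω‖^2 ∂P := by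
            rw [h0, h1, h2, h3, h4, h5]; ring
    simp_rw [hper]
    rw [Finset.sum_add_distrib, ← Finset.mul_sum]
  have hNsum : ∑ j, ∫ ω, ‖Nn j ω‖^2 ∂P ≤ (n:ℝ) * σ^2 := by
    rw [← integral_finset_sum univ (fun j _ => hNsq_int j)]
    have h1 : ∫ ω, ∑ j, ‖Nn j ω‖^2 ∂P ≤ ∫ ω, ∑ j, ‖noise j ω‖^2 ∂P :=
      integral_mono (integrable_finset_sum univ fun j _ => hNsq_int j)
        (integrable_finset_sum univ fun j _ => hvarint' j) (fun ω => hNsum_le ω)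
    have h2 : ∫ ω, ∑ j, ‖noise j ω‖^2 ∂P = ∑ j, ∫ ω, ‖noise j ω‖^2 ∂P :=
      integral_finset_sum univ fun j _ => hvarint' j
    have h3 : ∑ j, ∫ ω, ‖noise j ω‖^2 ∂P ≤ ∑ _j : Fin n, σ^2 :=
      Finset.sum_le_sum fun j _ => hvar' j
    have h4 : ∑ _j : Fin n, σ^2 = (n:ℝ)*σ^2 := by
      rw [Finset.sum_const, card_univ, Fintype.card_fin, nsmul_eq_mul]
    linarith
  -- main integral bound
  have hmain : ∫ ω, ∑ j, ‖Xp ω j - (n:ℝ)⁻¹ • ∑ i, Xp ω i‖^2 ∂P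
      ≤ (1-ρ) * ((∑ j, ‖D j‖^2) + η^2 * ((n:ℝ)*σ^2)) := by
    have hBint : Integrable (fun ω => (1-ρ) * ∑ j, ‖D j + (-η) • Nn j ω‖^2) P :=
      (integrable_finset_sum univ fun j _ => hjint j).const_mul _
    calc ∫ ω, ∑ j, ‖Xp ω j - (n:ℝ)⁻¹ • ∑ i, Xp ω i‖^2 ∂P
        ≤ ∫ ω, (1-ρ) * ∑ j, ‖D j + (-η) • Nn j ω‖^2 ∂P := by
          refine integral_mono_of_nonneg (ae_of_all _ fun ω => ?_) hBint
            (ae_of_all _ fun ω => hpoint ω)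
          exact Finset.sum_nonneg fun j _ => sq_nonneg _
      _ = (1-ρ) * ∫ ω, ∑ j, ‖D j + (-η) • Nn j ω‖^2 ∂P := integral_const_mul _ _
      _ ≤ (1-ρ) * ((∑ j, ‖D j‖^2) + η^2 * ((n:ℝ)*σ^2)) := by
          rw [hintS]
          refine mul_le_mul_of_nonneg_left ?_ (by linarith)
          have := mul_le_mul_of_nonneg_left hNsum (sq_nonneg η)
          linarith
  -- deterministic quantities
  set A : ℝ := ∑ j, ‖X j - xb‖^2 with hA
  set Mm : ℝ := ∑ j, ‖M j - mb‖^2 with hMm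
  set Cc : ℝ := ∑ j, ‖gr j - gb‖^2 with hCc
  have hA0 : (0:ℝ) ≤ A := Finset.sum_nonneg fun j _ => sq_nonneg _
  have hMm0 : (0:ℝ) ≤ Mm := Finset.sum_nonneg fun j _ => sq_nonneg _
  have hCc0 : (0:ℝ) ≤ Cc := Finset.sum_nonneg fun j _ => sq_nonneg _
  -- Young bound on D
  have hDsum : ∑ j, ‖D j‖^2
      ≤ (1+ρ/2)*A + (2*(1+2/ρ))*((η*β)^2*Mm) + (2*(1+2/ρ))*(η^2*Cc) := by
    have hj : ∀ j, ‖D j‖^2 ≤ (1+ρ/2)*‖X j - xb‖^2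
        + (2*(1+2/ρ))*((η*β)^2*‖M j - mb‖^2) + (2*(1+2/ρ))*(η^2*‖gr j - gb‖^2) := by
      intro j
      have hy := young3' (ρ/2) (by positivity) (X j - xb) ((-(η*β)) • (M j - mb))
        ((-η) • (gr j - gb))
      have e1 : ‖(-(η*β)) • (M j - mb)‖^2 = (η*β)^2 * ‖M j - mb‖^2 := by
        rw [norm_smul, Real.norm_eq_abs, mul_pow, sq_abs]; ring
      have e2 : ‖(-η) • (gr j - gb)‖^2 = η^2 * ‖gr j - gb‖^2 := by
        rw [norm_smul, Real.norm_eq_abs, mul_pow, sq_abs]; ring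
      have e3 : (1:ℝ)/(ρ/2) = 2/ρ := by rw [one_div, inv_div]
      rw [e1, e2, e3] at hy
      calc ‖D j‖^2 = ‖(X j - xb) + (-(η*β)) • (M j - mb) + (-η) • (gr j - gb)‖^2 := by
            rw [hD]
        _ ≤ _ := hy
    calc ∑ j, ‖D j‖^2
        ≤ ∑ j, ((1+ρ/2)*‖X j - xb‖^2 + (2*(1+2/ρ))*((η*β)^2*‖M j - mb‖^2)
            + (2*(1+2/ρ))*(η^2*‖gr j - gb‖^2)) := Finset.sum_le_sum fun j _ => hj j
      _ = (1+ρ/2)*A + (2*(1+2/ρ))*((η*β)^2*Mm) + (2*(1+2/ρ))*(η^2*Cc) := by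
          rw [hA, hMm, hCc]
          simp only [Finset.sum_add_distrib, Finset.mul_sum]
    
  -- heterogeneity/smoothness bound on Cc
  have hCb : Cc ≤ 2*L^2*A + 2*(n:ℝ)*ζ^2 := by
    set c0 : EuclideanSpace ℝ (Fin d) :=
      gradient (fun z => (n:ℝ)⁻¹ * ∑ j, f j z) xb with hc0
    have h1 : Cc ≤ ∑ j, ‖gr j - c0‖^2 := by
      have := osc_le_center' hn gr c0
      rw [hCc, hgb]
      exact this
    have h2 : ∀ j, ‖gr j - c0‖ ≤ L * ‖X j - xb‖ + ‖gradient (f j) xb - c0‖ := by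
      intro j
      calc ‖gr j - c0‖ = ‖(gr j - gradient (f j) xb) + (gradient (f j) xb - c0)‖ := by
            rw [sub_add_sub_cancel]
        _ ≤ ‖gr j - gradient (f j) xb‖ + ‖gradient (f j) xb - c0‖ := norm_add_le _ _
        _ ≤ L * ‖X j - xb‖ + ‖gradient (f j) xb - c0‖ := by
            have hs := hsmooth j (X j) xb
            have : ‖gr j - gradient (f j) xb‖ ≤ L * ‖X j - xb‖ := by
              simp only [hgr]; exact hs
            linarith
    have h3 : ∑ j, ‖gradient (f j) xb - c0‖^2 ≤ (n:ℝ)*ζ^2 := by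
      have hh := hhet xb
      rw [hc0]
      have := mul_le_mul_of_nonneg_left hh hnpos.le
      rw [← mul_assoc, mul_inv_cancel₀ hn', one_mul] at this
      linarith
    calc Cc ≤ ∑ j, ‖gr j - c0‖^2 := h1
      _ ≤ ∑ j, (2*L^2*‖X j - xb‖^2 + 2*‖gradient (f j) xb - c0‖^2) := by
          refine Finset.sum_le_sum fun j _ => ?_
          have hsq := sq_le_two_sq_add_two_sq (norm_nonneg (gr j - c0)) (h2 j)
          calc ‖gr j - c0‖^2 ≤ 2*(L*‖X j - xb‖)^2 + 2*‖gradient (f j) xb - c0‖^2 := hsq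
            _ = 2*L^2*‖X j - xb‖^2 + 2*‖gradient (f j) xb - c0‖^2 := by ring
      _ = 2*L^2*A + 2*∑ j, ‖gradient (f j) xb - c0‖^2 := by
          rw [hA, Finset.sum_add_distrib, ← Finset.mul_sum, ← Finset.mul_sum]
      _ ≤ 2*L^2*A + 2*((n:ℝ)*ζ^2) := by linarith
      _ = 2*L^2*A + 2*(n:ℝ)*ζ^2 := by ring
  -- scalar estimates
  clear_value A Mm Cc
  have hTR : (1-ρ)*((∑ j, ‖D j‖^2) + η^2*((n:ℝ)*σ^2))
      ≤ (1-ρ/4)*A + (12*η^2*ζ^2/ρ)*(n:ℝ) + 4*(1-ρ)*η^2*σ^2*(n:ℝ) + (6*η^2*β^2/ρ)*Mm :=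
    scalar_combine hρ hρ1 hA0 hMm0 hCc0 hnpos hη hL hstep hDsum hCb
  -- final assembly
  calc (n:ℝ)⁻¹ * ∫ ω, ∑ j, ‖Xp ω j - (n:ℝ)⁻¹ • ∑ i, Xp ω i‖^2 ∂P
      ≤ (n:ℝ)⁻¹ * ((1-ρ) * ((∑ j, ‖D j‖^2) + η^2*((n:ℝ)*σ^2))) := by
        refine mul_le_mul_of_nonneg_left ?_ (by positivity)
        exact hmain
    _ ≤ (n:ℝ)⁻¹ * ((1-ρ/4)*A + (12*η^2*ζ^2/ρ)*(n:ℝ) + 4*(1-ρ)*η^2*σ^2*(n:ℝ)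
          + (6*η^2*β^2/ρ)*Mm) := mul_le_mul_of_nonneg_left hTR (by positivity)
    _ = ((1 - ρ/4)/n) * A + 12*η^2*ζ^2/ρ + 4*(1-ρ)*η^2*σ^2 + (6*η^2*β^2/(ρ*n)) * Mm := by
        field_simp

end
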